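/- Let T be ergodic measure-preserving on (X,A,μ) and (A_l) asymptotically rare events. Then μ(μ(A_l)φ_{A_l} ≤ t) ⇒ 1 − e^{−θt} as l → ∞ (for θ ∈ (0,1]) implies that for every sequence of positive integers (k_l) with μ(A_l)k_l → t > 0, one has μ(φ_{A_l} = k_l) ∼ θ e^{−θt} μ(A_l). -/

import Mathlib

open MeasureTheory Filter Topology
open scoped ENNReal

noncomputable def hitTime {X : Type*} (T : X → X) (A : Set X) (x : X) : ℕ∞ :=
  sInf ((↑) '' {n : ℕ | 1 ≤ n ∧ T^[n] x ∈ A})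

section aux
variable {X : Type*} {T : X → X} {A : Set X}

lemma hitTime_le_iff {x : X} {n : ℕ} :
    hitTime T A x ≤ (n : ℕ∞) ↔ ∃ j, 1 ≤ j ∧ j ≤ n ∧ T^[j] x ∈ A := by
  constructor
  · intro h
    by_contra hc
    push_neg at hc
    have h2 : ((n + 1 : ℕ) : ℕ∞) ≤ hitTime T A x := by
      apply le_sInf
      rintro _ ⟨j, ⟨hj1, hjA⟩, rfl⟩
      have : n + 1 ≤ j := by
        by_contra h'
        push_neg at h'
        exact (hc j hj1 (Nat.lt_succ_iff.mp h')) hjA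
      exact_mod_cast this
    have h3 := h2.trans h
    have : (n:ℕ∞) < n + 1 := by exact_mod_cast Nat.lt_succ_self n
    exact absurd h3 (by push_cast; exact not_le.mpr this)
  · rintro ⟨j, h1, h2, hA⟩
    exact le_trans (sInf_le ⟨j, ⟨h1, hA⟩, rfl⟩) (by exact_mod_cast h2)

lemma hitTime_eq_iff {x : X} {n : ℕ} (hn : 1 ≤ n) :
    hitTime T A x = (n : ℕ∞) ↔
      hitTime T A x ≤ (n : ℕ∞) ∧ ¬ hitTime T A x ≤ ((n - 1 : ℕ) : ℕ∞) := by
  constructor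
  · intro h
    refine ⟨le_of_eq h, ?_⟩
    rw [h]
    intro hle
    have : n ≤ n - 1 := by exact_mod_cast hle
    omega
  · rintro ⟨h1, h2⟩
    have hne : hitTime T A x ≠ ⊤ := ne_top_of_le_ne_top (by simp) h1
    lift hitTime T A x to ℕ using hne with m hm
    have hm1 : m ≤ n := by exact_mod_cast h1
    have hm2 : ¬ m ≤ n - 1 := fun h => h2 (by exact_mod_cast h)
    have : m = n := by omega
    exact_mod_cast congrArg (Nat.cast : ℕ → ℕ∞) this

lemma setOf_hitTime_le (n : ℕ) :
    {x | hitTime T A x ≤ (n : ℕ∞)} = ⋃ j ∈ Finset.Icc 1 n, T^[j] ⁻¹' A := by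
  ext x
  simp only [Set.mem_setOf_eq, hitTime_le_iff, Set.mem_iUnion, Finset.mem_Icc,
    Set.mem_preimage]
  tauto

lemma measurableSet_hitTime_le [MeasurableSpace X] (hT : Measurable T)
    (hA : MeasurableSet A) (n : ℕ) : MeasurableSet {x | hitTime T A x ≤ (n : ℕ∞)} := by
  rw [setOf_hitTime_le]
  exact (Finset.Icc 1 n).measurableSet_biUnion fun j _ => (hT.iterate j) hA

lemma setOf_hitTime_eq (n : ℕ) (hn : 1 ≤ n) :
    {x | hitTime T A x = (n : ℕ∞)} =
      {x | hitTime T A x ≤ (n : ℕ∞)} \ {x | hitTime T A x ≤ ((n - 1 : ℕ) : ℕ∞)} := by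
  ext x
  simp only [Set.mem_setOf_eq, Set.mem_diff, hitTime_eq_iff hn]

lemma measurableSet_hitTime_eq [MeasurableSpace X] (hT : Measurable T)
    (hA : MeasurableSet A) (n : ℕ) (hn : 1 ≤ n) :
    MeasurableSet {x | hitTime T A x = (n : ℕ∞)} := by
  rw [setOf_hitTime_eq n hn]
  exact (measurableSet_hitTime_le hT hA n).diff (measurableSet_hitTime_le hT hA (n-1))

lemma hitTime_eq_iff' {x : X} {n : ℕ} (hn : 1 ≤ n) :
    hitTime T A x = (n : ℕ∞) ↔
      T^[n] x ∈ A ∧ ∀ j, 1 ≤ j → j < n → T^[j] x ∉ A := by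
  rw [hitTime_eq_iff hn, hitTime_le_iff, hitTime_le_iff]
  constructor
  · rintro ⟨⟨j, hj1, hjn, hjA⟩, h2⟩
    push_neg at h2
    have hj : j = n := by
      rcases lt_or_eq_of_le hjn with h | h
      · exact absurd hjA (h2 j hj1 (by omega))
      · exact h
    subst hj
    exact ⟨hjA, fun i hi1 hin => h2 i hi1 (by omega)⟩
  · rintro ⟨hA', hmiss⟩
    exact ⟨⟨n, hn, le_refl n, hA'⟩, by
      push_neg
      intro j hj1 hjn
      exact hmiss j hj1 (by omega)⟩

lemma hitTime_shift {n : ℕ} (hn : 1 ≤ n) :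
    {x | hitTime T A x = ((n + 1 : ℕ) : ℕ∞)} ⊆ T ⁻¹' {x | hitTime T A x = (n : ℕ∞)} := by
  intro x hx
  rw [Set.mem_setOf_eq, hitTime_eq_iff' (by omega)] at hx
  rw [Set.mem_preimage, Set.mem_setOf_eq, hitTime_eq_iff' hn]
  obtain ⟨hA', hmiss⟩ := hx
  constructor
  · rw [← Function.iterate_succ_apply]
    exact hA'
  · intro j hj1 hjn
    rw [← Function.iterate_succ_apply]
    exact hmiss (j+1) (by omega) (by omega)

variable [MeasurableSpace X] {μ : Measure X} [IsFiniteMeasure μ]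

lemma meas_hitTime_antitone (hT : MeasurePreserving T μ μ) (hA : MeasurableSet A)
    {n m : ℕ} (hn : 1 ≤ n) (hnm : n ≤ m) :
    μ {x | hitTime T A x = (m : ℕ∞)} ≤ μ {x | hitTime T A x = (n : ℕ∞)} := by
  induction m with
  | zero => omega
  | succ m ih =>
    rcases Nat.lt_or_ge n (m+1) with h | h
    · have hm1 : 1 ≤ m := by omega
      calc μ {x | hitTime T A x = ((m + 1 : ℕ) : ℕ∞)}
          ≤ μ (T ⁻¹' {x | hitTime T A x = (m : ℕ∞)}) :=
            measure_mono (hitTime_shift hm1)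
        _ = μ {x | hitTime T A x = (m : ℕ∞)} :=
            hT.measure_preimage
              (measurableSet_hitTime_eq hT.measurable hA m hm1).nullMeasurableSet
        _ ≤ μ {x | hitTime T A x = (n : ℕ∞)} := ih (by omega)
    · have : n = m + 1 := by omega
      subst this
      exact le_refl _

lemma meas_hitTime_le_succ (hT : MeasurePreserving T μ μ) (hA : MeasurableSet A) (n : ℕ) :
    μ {x | hitTime T A x ≤ ((n + 1 : ℕ) : ℕ∞)} =
      μ {x | hitTime T A x ≤ (n : ℕ∞)} + μ {x | hitTime T A x = ((n + 1 : ℕ) : ℕ∞)} := by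
  have hsub : {x | hitTime T A x ≤ (n : ℕ∞)} ⊆ {x | hitTime T A x ≤ ((n + 1 : ℕ) : ℕ∞)} := by
    intro x hx
    exact le_trans hx (by exact_mod_cast Nat.le_succ n : (n:ℕ∞) ≤ ((n+1:ℕ):ℕ∞))
  have hd : {x | hitTime T A x = ((n + 1 : ℕ) : ℕ∞)} =
      {x | hitTime T A x ≤ ((n + 1 : ℕ) : ℕ∞)} \ {x | hitTime T A x ≤ (n : ℕ∞)} := by
    simpa using setOf_hitTime_eq (n+1) (by omega)
  rw [hd, measure_diff hsub (measurableSet_hitTime_le hT.measurable hA n).nullMeasurableSet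
    (measure_ne_top μ _)]
  have hle : μ {x | hitTime T A x ≤ (n : ℕ∞)} ≤ μ {x | hitTime T A x ≤ ((n+1 : ℕ) : ℕ∞)} :=
    measure_mono hsub
  exact (add_tsub_cancel_of_le hle).symm

lemma meas_hitTime_sum (hT : MeasurePreserving T μ μ) (hA : MeasurableSet A)
    {a m : ℕ} (ham : a ≤ m) :
    μ {x | hitTime T A x ≤ (m : ℕ∞)} =
      μ {x | hitTime T A x ≤ (a : ℕ∞)} +
        ∑ j ∈ Finset.Ioc a m, μ {x | hitTime T A x = (j : ℕ∞)} := by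
  induction m with
  | zero =>
    have : a = 0 := by omega
    subst this; simp
  | succ m ih =>
    rcases Nat.lt_or_ge a (m+1) with h | h
    · have ham' : a ≤ m := by omega
      rw [meas_hitTime_le_succ hT hA m, ih ham',
        Finset.sum_Ioc_succ_top (by omega : a ≤ m), add_assoc]
    · have : a = m + 1 := by omega
      subst this; simp

lemma mul_le_ofReal_iff {c : ℝ≥0∞} (hc0 : c ≠ 0) (hct : c ≠ ⊤) {s : ℝ} (hs : 0 ≤ s)
    (e : ℕ∞) :
    c * (e : ℝ≥0∞) ≤ ENNReal.ofReal s ↔ e ≤ ((⌊s / c.toReal⌋₊ : ℕ) : ℕ∞) := by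
  have hct' : 0 < c.toReal := ENNReal.toReal_pos hc0 hct
  induction e using ENat.recTopCoe with
  | top =>
    simp only [ENat.toENNReal_top, ENNReal.mul_top hc0]
    constructor
    · intro h
      exact absurd (h.trans_lt ENNReal.ofReal_lt_top) (lt_irrefl _)
    · intro h
      exact absurd h (by simp)
  | coe j =>
    rw [ENat.toENNReal_coe]
    have hc : c = ENNReal.ofReal c.toReal := (ENNReal.ofReal_toReal hct).symm
    rw [Nat.cast_le]
    constructor
    · intro h
      rw [hc, ← ENNReal.ofReal_natCast j, ← ENNReal.ofReal_mul hct'.le,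
        ENNReal.ofReal_le_ofReal_iff hs] at h
      rw [Nat.le_floor_iff (div_nonneg hs hct'.le)]
      rw [le_div_iff₀ hct']
      linarith [h]
    · intro h
      have h1 : (j : ℝ) ≤ s / c.toReal := le_trans (Nat.cast_le.mpr h) (Nat.floor_le
        (div_nonneg hs hct'.le))
      have h2 : c.toReal * j ≤ s := by
        rw [mul_comm]
        exact (le_div_iff₀ hct').mp h1
      rw [hc, ← ENNReal.ofReal_natCast j, ← ENNReal.ofReal_mul hct'.le]
      exact ENNReal.ofReal_le_ofReal h2

lemma setOf_mul_hitTime_le {c : ℝ≥0∞} (hc0 : c ≠ 0) (hct : c ≠ ⊤) {s : ℝ} (hs : 0 ≤ s) :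
    {x | c * ((hitTime T A x : ℕ∞) : ℝ≥0∞) ≤ ENNReal.ofReal s} =
      {x | hitTime T A x ≤ ((⌊s / c.toReal⌋₊ : ℕ) : ℕ∞)} := by
  ext x
  exact mul_le_ofReal_iff hc0 hct hs _
end aux

section analytic

lemma slope_tendsto_aux {F : ℝ → ℝ} {d : ℝ} (hF : HasDerivAt F d 0) (hF0 : F 0 = 0)
    {t : ℝ} (ht : 0 < t) :
    Filter.Tendsto (fun δ => F δ / (δ * t)) (𝓝[>] (0:ℝ)) (𝓝 (d / t)) := by
  have h1 : Filter.Tendsto (slope F 0) (𝓝[≠] (0:ℝ)) (𝓝 d) :=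
    hasDerivAt_iff_tendsto_slope.mp hF
  have h2 : Filter.Tendsto (slope F 0) (𝓝[>] (0:ℝ)) (𝓝 d) :=
    h1.mono_left (nhdsWithin_mono 0 (fun x hx => ne_of_gt hx))
  have h3 := h2.div_const t
  refine h3.congr' ?_
  filter_upwards [self_mem_nhdsWithin] with δ (hδ : 0 < δ)
  rw [slope_def_field, hF0, sub_zero, sub_zero, div_div]

lemma hasDerivAt_one_sub (c : ℝ) :
    HasDerivAt (fun δ : ℝ => Real.exp (c * (1 - δ))) (-c * Real.exp c) 0 := by
  have h1 : HasDerivAt (fun δ : ℝ => c * (1 - δ)) (-c) 0 := by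
    have := ((hasDerivAt_id (0:ℝ)).const_sub 1).const_mul c
    simpa using this
  have := h1.exp
  simpa using this.congr_deriv (by ring)

lemma hasDerivAt_one_add_sq (c : ℝ) :
    HasDerivAt (fun δ : ℝ => Real.exp (c * (1 + δ * δ))) 0 0 := by
  have h1 : HasDerivAt (fun δ : ℝ => c * (1 + δ * δ)) 0 0 := by
    have := (((hasDerivAt_id (0:ℝ)).mul (hasDerivAt_id 0)).const_add 1).const_mul c
    simpa using this
  have := h1.exp
  simpa using this

lemma hasDerivAt_one_add (c : ℝ) :
    HasDerivAt (fun δ : ℝ => Real.exp (c * (1 + δ))) (c * Real.exp c) 0 := by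
  have h1 : HasDerivAt (fun δ : ℝ => c * (1 + δ)) c 0 := by
    have := ((hasDerivAt_id (0:ℝ)).const_add 1).const_mul c
    simpa using this
  have := h1.exp
  simpa using this.congr_deriv (by ring)

lemma tendsto_Lplus {θ t : ℝ} (hθ : 0 < θ) (ht : 0 < t) :
    Filter.Tendsto
      (fun δ : ℝ => (Real.exp (-θ * t * (1 - δ)) - Real.exp (-θ * t * (1 + δ * δ))) / (δ * t))
      (𝓝[>] (0:ℝ)) (𝓝 (θ * Real.exp (-θ * t))) := by
  have hF : HasDerivAt
      (fun δ : ℝ => Real.exp (-θ * t * (1 - δ)) - Real.exp (-θ * t * (1 + δ * δ)))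
      (θ * t * Real.exp (-θ * t)) 0 := by
    have := (hasDerivAt_one_sub (-θ * t)).sub (hasDerivAt_one_add_sq (-θ * t))
    exact this.congr_deriv (by ring)
  have := slope_tendsto_aux hF (by simp) ht
  have heq : θ * t * Real.exp (-θ * t) / t = θ * Real.exp (-θ * t) := by
    field_simp
  rwa [heq] at this

lemma tendsto_Lminus {θ t : ℝ} (hθ : 0 < θ) (ht : 0 < t) :
    Filter.Tendsto
      (fun δ : ℝ => (Real.exp (-θ * t * (1 + δ * δ)) - Real.exp (-θ * t * (1 + δ))) / (δ * t))
      (𝓝[>] (0:ℝ)) (𝓝 (θ * Real.exp (-θ * t))) := by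
  have hF : HasDerivAt
      (fun δ : ℝ => Real.exp (-θ * t * (1 + δ * δ)) - Real.exp (-θ * t * (1 + δ)))
      (θ * t * Real.exp (-θ * t)) 0 := by
    have := (hasDerivAt_one_add_sq (-θ * t)).sub (hasDerivAt_one_add (-θ * t))
    exact this.congr_deriv (by ring)
  have := slope_tendsto_aux hF (by simp) ht
  have heq : θ * t * Real.exp (-θ * t) / t = θ * Real.exp (-θ * t) := by
    field_simp
  rwa [heq] at this

end analytic

set_option maxHeartbeats 2000000 in
/-- Exponential automatic LLT for hitting times: if
`μ(μ(A l)·φ_{A l} ≤ t) ⇒ 1 − e^{−θt}` with `θ ∈ (0,1]`, then for every sequence of positive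
integers `k l` with `μ(A l)·k l → t > 0` one has `μ(φ_{A l} = k l) ∼ θ e^{−θt} μ(A l)`. -/
theorem stmt_7 {X : Type*} [MeasurableSpace X] {μ : Measure X} [IsProbabilityMeasure μ]
    {T : X → X} (hT : Ergodic T μ) {A : ℕ → Set X} (hmeas : ∀ l, MeasurableSet (A l))
    (hpos : ∀ l, 0 < μ (A l)) (hrare : Tendsto (fun l => μ (A l)) atTop (𝓝 0))
    {θ : ℝ} (hθ0 : 0 < θ) (hθ1 : θ ≤ 1)
    (hcvg : ∀ t : ℝ, 0 ≤ t →
      Tendsto (fun l =>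
          (μ {x | μ (A l) * ((hitTime T (A l) x : ℕ∞) : ℝ≥0∞) ≤ ENNReal.ofReal t}).toReal)
        atTop (𝓝 (1 - Real.exp (-θ * t))))
    {k : ℕ → ℕ} (hk1 : ∀ l, 1 ≤ k l) {t : ℝ} (ht : 0 < t)
    (hkt : Tendsto (fun l => (μ (A l)).toReal * (k l : ℝ)) atTop (𝓝 t)) :
    Tendsto (fun l => (μ {x | hitTime T (A l) x = (k l : ℕ∞)}).toReal / (μ (A l)).toReal)
      atTop (𝓝 (θ * Real.exp (-θ * t))) := by
  have hTm : MeasurePreserving T μ μ := hT.toMeasurePreserving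
  set a : ℕ → ℝ := fun l => (μ (A l)).toReal with ha_def
  have ha0 : ∀ l, 0 < a l := fun l =>
    ENNReal.toReal_pos (hpos l).ne' (measure_ne_top μ _)
  have haT : Tendsto a atTop (𝓝 0) := by
    have := (ENNReal.tendsto_toReal ENNReal.zero_ne_top).comp hrare
    rw [ENNReal.toReal_zero] at this
    exact this
  set FR : ℕ → ℕ → ℝ := fun l n => (μ {x | hitTime T (A l) x ≤ (n : ℕ∞)}).toReal with hFR_def
  set fr : ℕ → ℕ → ℝ := fun l n => (μ {x | hitTime T (A l) x = (n : ℕ∞)}).toReal with hfr_def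
  set N : ℕ → ℝ → ℕ := fun l s => ⌊s / a l⌋₊ with hN_def
  -- G convergence
  have hG : ∀ s : ℝ, 0 ≤ s →
      Tendsto (fun l => FR l (N l s)) atTop (𝓝 (1 - Real.exp (-θ * s))) := by
    intro s hs
    have := hcvg s hs
    refine this.congr fun l => ?_
    congr 1
    exact congrArg μ (setOf_mul_hitTime_le (hpos l).ne' (measure_ne_top μ _) hs)
  -- real measure facts
  have frnn : ∀ l n, 0 ≤ fr l n := fun l n => ENNReal.toReal_nonneg
  have frAnti : ∀ l n m, 1 ≤ n → n ≤ m → fr l m ≤ fr l n := by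
    intro l n m hn hnm
    exact ENNReal.toReal_mono (measure_ne_top μ _)
      (meas_hitTime_antitone hTm (hmeas l) hn hnm)
  have FRmono : ∀ l n m, n ≤ m → FR l n ≤ FR l m := by
    intro l n m hnm
    refine ENNReal.toReal_mono (measure_ne_top μ _) (measure_mono fun x hx => ?_)
    have hx' : hitTime T (A l) x ≤ (n : ℕ∞) := hx
    exact le_trans hx' (by exact_mod_cast hnm : (n:ℕ∞) ≤ (m:ℕ∞))
  have sumR : ∀ l b m, b ≤ m →
      FR l m = FR l b + ∑ j ∈ Finset.Ioc b m, fr l j := by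
    intro l b m hbm
    have h := meas_hitTime_sum hTm (hmeas l) hbm
    have hsne : (∑ j ∈ Finset.Ioc b m, μ {x | hitTime T (A l) x = (j : ℕ∞)}) ≠ ⊤ := by
      have hle : (∑ j ∈ Finset.Ioc b m, μ {x | hitTime T (A l) x = (j : ℕ∞)}) ≤
          μ {x | hitTime T (A l) x ≤ (m : ℕ∞)} := h ▸ le_add_self
      exact (lt_of_le_of_lt hle (measure_lt_top μ _)).ne
    rw [hFR_def, hfr_def]
    simp only
    rw [h, ENNReal.toReal_add (measure_ne_top μ _) hsne,
      ENNReal.toReal_sum (fun j _ => measure_ne_top μ _)]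
  -- main
  set L : ℝ := θ * Real.exp (-θ * t) with hL_def
  rw [Metric.tendsto_nhds]
  intro ε hε
  -- choose δ
  have hLp := tendsto_Lplus hθ0 ht
  have hLm := tendsto_Lminus hθ0 ht
  have e1 : ∀ᶠ δ in 𝓝[>] (0:ℝ),
      (Real.exp (-θ * t * (1 - δ)) - Real.exp (-θ * t * (1 + δ * δ))) / (δ * t) < L + ε/2 :=
    hLp.eventually_lt_const (by rw [hL_def]; linarith)
  have e2 : ∀ᶠ δ in 𝓝[>] (0:ℝ),
      L - ε/2 < (Real.exp (-θ * t * (1 + δ * δ)) - Real.exp (-θ * t * (1 + δ))) / (δ * t) :=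
    hLm.eventually_const_lt (by rw [hL_def]; linarith)
  have e3 : ∀ᶠ δ in 𝓝[>] (0:ℝ), δ < 1 :=
    eventually_nhdsWithin_of_eventually_nhds (Filter.Tendsto.eventually_lt_const one_pos tendsto_id)
  have e4 : ∀ᶠ δ in 𝓝[>] (0:ℝ), (0:ℝ) < δ := self_mem_nhdsWithin
  obtain ⟨δ, ⟨⟨hδp, hδm⟩, hδ1, hδ0⟩⟩ := ((e1.and e2).and (e3.and e4)).exists
  have hs1nn : (0:ℝ) ≤ t * (1 - δ) := by nlinarith
  have hs2nn : (0:ℝ) ≤ t * (1 + δ * δ) := by nlinarith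
  have hs3nn : (0:ℝ) ≤ t * (1 + δ) := by nlinarith
  have hG1 := hG (t * (1 - δ)) hs1nn
  have hG2 := hG (t * (1 + δ * δ)) hs2nn
  have hG3 := hG (t * (1 + δ)) hs3nn
  rw [show -θ * (t * (1 - δ)) = -θ * t * (1 - δ) from by ring] at hG1
  rw [show -θ * (t * (1 + δ * δ)) = -θ * t * (1 + δ * δ) from by ring] at hG2
  rw [show -θ * (t * (1 + δ)) = -θ * t * (1 + δ) from by ring] at hG3
  -- RHS and LHS tendsto
  have hden1 : Tendsto (fun l => a l * (k l : ℝ) - t * (1 - δ)) atTop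
      (𝓝 (t - t * (1 - δ))) := hkt.sub_const _
  have hden2 : Tendsto (fun l => t * (1 + δ) - a l * (k l : ℝ)) atTop
      (𝓝 (t * (1 + δ) - t)) := (tendsto_const_nhds.sub hkt)
  have hdt : (0:ℝ) < δ * t := by positivity
  have hRHS : Tendsto
      (fun l => (FR l (N l (t * (1 + δ * δ))) - FR l (N l (t * (1 - δ)))) /
        (a l * (k l : ℝ) - t * (1 - δ))) atTop
      (𝓝 ((Real.exp (-θ * t * (1 - δ)) - Real.exp (-θ * t * (1 + δ * δ))) / (δ * t))) := by
    have hnum := hG2.sub hG1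
    rw [show (1 - Real.exp (-θ * t * (1 + δ * δ))) - (1 - Real.exp (-θ * t * (1 - δ)))
      = Real.exp (-θ * t * (1 - δ)) - Real.exp (-θ * t * (1 + δ * δ)) from by ring] at hnum
    have hd := hnum.div hden1 (by nlinarith : t - t * (1 - δ) ≠ 0)
    rwa [show t - t * (1 - δ) = δ * t from by ring] at hd
  have hLHS : Tendsto
      (fun l => (FR l (N l (t * (1 + δ))) - FR l (N l (t * (1 + δ * δ)))) /
        (t * (1 + δ) - a l * (k l : ℝ))) atTop
      (𝓝 ((Real.exp (-θ * t * (1 + δ * δ)) - Real.exp (-θ * t * (1 + δ))) / (δ * t))) := by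
    have hnum := hG3.sub hG2
    rw [show (1 - Real.exp (-θ * t * (1 + δ))) - (1 - Real.exp (-θ * t * (1 + δ * δ)))
      = Real.exp (-θ * t * (1 + δ * δ)) - Real.exp (-θ * t * (1 + δ)) from by ring] at hnum
    have hd := hnum.div hden2 (by nlinarith : t * (1 + δ) - t ≠ 0)
    rwa [show t * (1 + δ) - t = δ * t from by ring] at hd
  have hev1 : ∀ᶠ l in atTop, t * (1 - δ) < a l * (k l : ℝ) :=
    hkt.eventually_const_lt (by nlinarith)
  have hev2 : ∀ᶠ l in atTop, a l * (k l : ℝ) < t * (1 + δ * δ) :=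
    hkt.eventually_lt_const (by nlinarith)
  have hev3 : ∀ᶠ l in atTop, a l * (k l : ℝ) + a l < t * (1 + δ) := by
    have := hkt.add haT
    rw [add_zero] at this
    exact this.eventually_lt_const (by nlinarith)
  have hevR : ∀ᶠ l in atTop,
      (FR l (N l (t * (1 + δ * δ))) - FR l (N l (t * (1 - δ)))) /
        (a l * (k l : ℝ) - t * (1 - δ)) < L + ε :=
    hRHS.eventually_lt_const (by linarith)
  have hevL : ∀ᶠ l in atTop, L - ε <
      (FR l (N l (t * (1 + δ))) - FR l (N l (t * (1 + δ * δ)))) /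
        (t * (1 + δ) - a l * (k l : ℝ)) :=
    hLHS.eventually_const_lt (by linarith)
  filter_upwards [hev1, hev2, hev3, hevR, hevL] with l h1 h2 h3 h4 h5
  have hal := ha0 l
  set kk := k l with hkk_def
  set K1 := N l (t * (1 - δ)) with hK1_def
  set K2 := N l (t * (1 + δ * δ)) with hK2_def
  set K3 := N l (t * (1 + δ)) with hK3_def
  have haN : ∀ s : ℝ, 0 ≤ s → a l * (N l s : ℝ) ≤ s := by
    intro s hs
    have hfl := Nat.floor_le (div_nonneg hs hal.le)
    calc a l * (N l s : ℝ) ≤ a l * (s / a l) := mul_le_mul_of_nonneg_left hfl hal.le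
      _ = s := by field_simp
  have hK1le : a l * (K1 : ℝ) ≤ t * (1 - δ) := haN _ hs1nn
  have hK3le : a l * (K3 : ℝ) ≤ t * (1 + δ) := haN _ hs3nn
  have hK1k : K1 < kk := by
    by_contra hcon
    push_neg at hcon
    have h' : a l * (kk : ℝ) ≤ a l * (K1 : ℝ) :=
      mul_le_mul_of_nonneg_left (Nat.cast_le.mpr hcon) hal.le
    linarith
  have hkK2 : kk ≤ K2 := by
    refine Nat.le_floor ?_
    rw [le_div_iff₀ hal]
    linarith
  have hkK3 : kk < K3 := by
    have : kk + 1 ≤ K3 := by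
      refine Nat.le_floor ?_
      rw [le_div_iff₀ hal]
      push_cast
      linarith
    omega
  -- sum bounds
  have hsum1 := sumR l K1 kk hK1k.le
  have hsum3 := sumR l kk K3 hkK3.le
  have hlow1 : ((kk : ℝ) - (K1 : ℝ)) * fr l kk ≤ FR l kk - FR l K1 := by
    have hb := Finset.card_nsmul_le_sum (Finset.Ioc K1 kk) (fun j => fr l j) (fr l kk)
      (fun j hj => by
        rw [Finset.mem_Ioc] at hj
        exact frAnti l j kk (by omega) hj.2)
    rw [Nat.card_Ioc, nsmul_eq_mul, Nat.cast_sub hK1k.le] at hb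
    linarith
  have hhigh3 : FR l K3 - FR l kk ≤ ((K3 : ℝ) - (kk : ℝ)) * fr l kk := by
    have hb := Finset.sum_le_card_nsmul (Finset.Ioc kk K3) (fun j => fr l j) (fr l kk)
      (fun j hj => by
        rw [Finset.mem_Ioc] at hj
        exact frAnti l kk j (hk1 l) hj.1.le)
    rw [Nat.card_Ioc, nsmul_eq_mul, Nat.cast_sub hkK3.le] at hb
    linarith
  have hFRk2 : FR l kk ≤ FR l K2 := FRmono l kk K2 hkK2
  -- upper bound
  have hup : fr l kk / a l ≤
      (FR l K2 - FR l K1) / (a l * (kk : ℝ) - t * (1 - δ)) := by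
    rw [div_le_div_iff₀ hal (by linarith)]
    nlinarith [mul_le_mul_of_nonneg_left hK1le (frnn l kk),
      mul_le_mul_of_nonneg_left hlow1 hal.le,
      mul_le_mul_of_nonneg_right hFRk2 hal.le]
  -- lower bound
  have hlo : (FR l K3 - FR l K2) / (t * (1 + δ) - a l * (kk : ℝ)) ≤ fr l kk / a l := by
    rw [div_le_div_iff₀ (by linarith) hal]
    have h' : FR l K3 - FR l K2 ≤ ((K3 : ℝ) - (kk : ℝ)) * fr l kk := by linarith
    nlinarith [mul_le_mul_of_nonneg_right h' hal.le,
      mul_le_mul_of_nonneg_left hK3le (frnn l kk)]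
  rw [Real.dist_eq, abs_sub_lt_iff]
  constructor
  · linarith
  · linarith
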